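/- Let n ≥ 3 be an integer. Then inf_{r ∈ (1,∞)} d(r)/δ(r) > 0; that is, there exists a constant c > 0 such that d(r) ≥ c·δ(r) for all r > 1. -/

import Mathlib

open Filter

noncomputable def schR (n : ℕ) : ℝ := ((4 : ℝ) / 3) ^ (((n : ℝ) - 2)⁻¹)

/-- The weight function `δ` of the Schwarzschild Hardy inequality. -/
noncomputable def schDelta (n : ℕ) (r : ℝ) : ℝ :=
  if r < schR n then 2 * r ^ (n - 1) * Real.sqrt ((r ^ (n - 2) - 1) / r ^ (n - 2))
  else 2 * r ^ (n - 1) * (1 - Real.sqrt ((r ^ (n - 2) - 1) / r ^ (n - 2)))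

/-- The Riemannian distance from the event horizon:
`d(r) = ∫₁^r √(ξ^(n−2)/(ξ^(n−2)−1)) dξ`. -/
noncomputable def schDist (n : ℕ) (r : ℝ) : ℝ :=
  ∫ ξ in (1 : ℝ)..r, Real.sqrt (ξ ^ (n - 2) / (ξ ^ (n - 2) - 1))

private lemma sch_const_eq {P K s u : ℝ} (hP : 0 < P) (hs : 0 < s) (hK : s * s = K) :
    (P * K)⁻¹ * (2 * P * (s * u)) = 2 / s * u := by
  subst hK; field_simp

private lemma sch_rpow_neg_half {x : ℝ} (hx : 0 ≤ x) :
    x ^ (-(1/2) : ℝ) = (Real.sqrt x)⁻¹ := by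
  rw [Real.rpow_neg hx, Real.sqrt_eq_rpow]

/-- `inf_{r ∈ (1,∞)} d(r)/δ(r) > 0`; i.e. there exists `c > 0` with
`d(r) ≥ c·δ(r)` for all `r > 1`. -/
theorem schDist_div_schDelta_bddBelow (n : ℕ) (hn : 3 ≤ n) :
    ∃ c : ℝ, 0 < c ∧ ∀ r : ℝ, 1 < r → c * schDelta n r ≤ schDist n r := by
  obtain ⟨k, rfl⟩ : ∃ k, n = k + 3 := ⟨n - 3, by omega⟩
  have h2 : k + 3 - 2 = k + 1 := by omega
  have h1 : k + 3 - 1 = k + 2 := by omega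
  set R : ℝ := schR (k + 3) with hRdef
  set f : ℝ → ℝ := fun ξ => Real.sqrt (ξ ^ (k+1) / (ξ ^ (k+1) - 1)) with hf
  have hd : ∀ r : ℝ, schDist (k+3) r = ∫ ξ in (1:ℝ)..r, f ξ := by
    intro r; simp only [schDist, h2, hf]
  -- R ^ (k+1) = 4/3 and 1 < R
  have he : ((↑(k+3) : ℝ) - 2) = ((↑(k+1) : ℕ) : ℝ) := by push_cast; ring
  have hRpow : R ^ (k+1) = 4/3 := by
    rw [hRdef, schR, ← Real.rpow_natCast (((4:ℝ)/3) ^ _) (k+1), ← Real.rpow_mul (by norm_num)]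
    rw [he, inv_mul_cancel₀ (by positivity), Real.rpow_one]
  have hR1 : 1 < R := by
    rw [hRdef, schR, he, Real.one_lt_rpow_iff_of_pos (by norm_num)]
    left
    refine ⟨by norm_num, by positivity⟩
  have hR0 : (0:ℝ) < R := by linarith
  -- constant K with ξ^(k+1) - 1 ≤ K (ξ - 1) on [1, R]
  set K : ℝ := (k+1) * R ^ k with hK
  have hK0 : 0 < K := by positivity
  have hsK : Real.sqrt K * Real.sqrt K = K := Real.mul_self_sqrt hK0.le
  have hsK0 : 0 < Real.sqrt K := Real.sqrt_pos.2 hK0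
  have hgeom : ∀ ξ : ℝ, 1 ≤ ξ → ξ ≤ R → ξ ^ (k+1) - 1 ≤ K * (ξ - 1) := by
    intro ξ hξ1 hξR
    rw [← geom_sum_mul ξ (k+1)]
    have hsum : (∑ i ∈ Finset.range (k+1), ξ ^ i) ≤ K := by
      have := Finset.sum_le_card_nsmul (Finset.range (k+1)) (fun i => ξ ^ i) (R ^ k) ?_
      · simpa [nsmul_eq_mul, hK] using this
      · intro i hi
        simp only [Finset.mem_range] at hi
        calc ξ ^ i ≤ R ^ i := pow_le_pow_left₀ (by linarith) hξR i
          _ ≤ R ^ k := pow_le_pow_right₀ hR1.le (by omega)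
    exact mul_le_mul_of_nonneg_right hsum (by linarith)
  -- measurability
  have hmeas : Measurable f := by
    exact Real.continuous_sqrt.measurable.comp
      (((measurable_id.pow_const (k+1)).div ((measurable_id.pow_const (k+1)).sub measurable_const)))
  -- integrability on [1, r]
  have hint : ∀ r : ℝ, 1 ≤ r → IntervalIntegrable f MeasureTheory.volume 1 r := by
    intro r hr
    have h0 : IntervalIntegrable (fun x : ℝ => x ^ (-(1/2) : ℝ)) MeasureTheory.volume 0 (r - 1) :=
      intervalIntegral.intervalIntegrable_rpow' (by norm_num)
    have hG : IntervalIntegrable (fun ξ : ℝ => Real.sqrt (r ^ (k+1)) * (ξ - 1) ^ (-(1/2) : ℝ))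
        MeasureTheory.volume 1 r := by
      have := (h0.comp_sub_right 1).const_mul (Real.sqrt (r ^ (k+1)))
      simpa using this
    apply hG.mono_fun hmeas.aestronglyMeasurable
    apply MeasureTheory.ae_restrict_of_forall_mem measurableSet_uIoc
    intro ξ hξ
    rw [Set.uIoc_of_le hr] at hξ
    obtain ⟨hξ1, hξr⟩ := hξ
    have hx1 : (0:ℝ) < ξ - 1 := by linarith
    have hxm : ξ - 1 ≤ ξ ^ (k+1) - 1 := by
      have : ξ ≤ ξ ^ (k+1) := le_self_pow₀ (by linarith) (by omega)
      linarith
    have hbound : ξ ^ (k+1) / (ξ ^ (k+1) - 1) ≤ r ^ (k+1) / (ξ - 1) := by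
      apply div_le_div₀ (by positivity) (pow_le_pow_left₀ (by linarith) hξr _) hx1 hxm
    show ‖f ξ‖ ≤ ‖Real.sqrt (r ^ (k+1)) * (ξ - 1) ^ (-(1/2) : ℝ)‖
    rw [Real.norm_eq_abs, abs_of_nonneg (Real.sqrt_nonneg _)]
    calc f ξ ≤ Real.sqrt (r ^ (k+1) / (ξ - 1)) := Real.sqrt_le_sqrt hbound
      _ = Real.sqrt (r ^ (k+1)) * (ξ - 1) ^ (-(1/2) : ℝ) := by
          rw [Real.sqrt_div (by positivity), sch_rpow_neg_half hx1.le, div_eq_mul_inv]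
      _ ≤ ‖Real.sqrt (r ^ (k+1)) * (ξ - 1) ^ (-(1/2) : ℝ)‖ := le_abs_self _
  -- lower bound for 1 < r ≤ R
  have hlow : ∀ r : ℝ, 1 < r → r ≤ R →
      2 / Real.sqrt K * Real.sqrt (r - 1) ≤ schDist (k+3) r := by
    intro r hr hrR
    rw [hd r]
    have hL : IntervalIntegrable (fun ξ : ℝ => (Real.sqrt K)⁻¹ * (ξ - 1) ^ (-(1/2) : ℝ))
        MeasureTheory.volume 1 r := by
      have h0 : IntervalIntegrable (fun x : ℝ => x ^ (-(1/2) : ℝ)) MeasureTheory.volume 0 (r - 1) :=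
        intervalIntegral.intervalIntegrable_rpow' (by norm_num)
      have := (h0.comp_sub_right 1).const_mul (Real.sqrt K)⁻¹
      simpa using this
    have hle : ∀ ξ ∈ Set.Icc (1:ℝ) r,
        (Real.sqrt K)⁻¹ * (ξ - 1) ^ (-(1/2) : ℝ) ≤ f ξ := by
      intro ξ hξ
      rcases eq_or_lt_of_le hξ.1 with heq | hlt
      · rw [← heq]
        rw [show ((1:ℝ) - 1) = 0 by ring, Real.zero_rpow (by norm_num : (-(1/2):ℝ) ≠ 0)]
        simp [hf]
      · have hx1 : (0:ℝ) < ξ - 1 := by linarith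
        have hξR : ξ ≤ R := le_trans hξ.2 hrR
        have hgm := hgeom ξ hlt.le hξR
        have hxm1 : (0:ℝ) < ξ ^ (k+1) - 1 := by
          have : (1:ℝ) < ξ ^ (k+1) := one_lt_pow₀ hlt (by omega)
          linarith
        have step1 : (K * (ξ - 1))⁻¹ ≤ ξ ^ (k+1) / (ξ ^ (k+1) - 1) := by
          have h1 : (K * (ξ - 1))⁻¹ ≤ (ξ ^ (k+1) - 1)⁻¹ :=
            inv_anti₀ hxm1 hgm
          have h2 : (ξ ^ (k+1) - 1)⁻¹ ≤ ξ ^ (k+1) / (ξ ^ (k+1) - 1) := by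
            rw [div_eq_mul_inv]
            exact le_mul_of_one_le_left (inv_nonneg.2 hxm1.le) (one_lt_pow₀ hlt (by omega)).le
          exact h1.trans h2
        have := Real.sqrt_le_sqrt step1
        calc (Real.sqrt K)⁻¹ * (ξ - 1) ^ (-(1/2) : ℝ)
            = Real.sqrt ((K * (ξ - 1))⁻¹) := by
              rw [sch_rpow_neg_half hx1.le, ← mul_inv, ← Real.sqrt_mul hK0.le, ← Real.sqrt_inv]
          _ ≤ f ξ := this
    have hmono := intervalIntegral.integral_mono_on hr.le hL (hint r hr.le) hle
    have hcalc : (∫ ξ in (1:ℝ)..r, (Real.sqrt K)⁻¹ * (ξ - 1) ^ (-(1/2) : ℝ))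
        = 2 / Real.sqrt K * Real.sqrt (r - 1) := by
      rw [intervalIntegral.integral_const_mul]
      rw [intervalIntegral.integral_comp_sub_right (fun x : ℝ => x ^ (-(1/2) : ℝ)) 1]
      rw [integral_rpow (Or.inl (by norm_num))]
      norm_num
      rw [← Real.sqrt_eq_rpow]
      ring
    linarith [hmono, hcalc.symm.le]
  -- constants
  set c₁ : ℝ := (R ^ (k+2) * K)⁻¹ with hc1
  have hc1pos : 0 < c₁ := by positivity
  set A : ℝ := 2 / Real.sqrt K * Real.sqrt (R - 1) with hA
  have hApos : 0 < A := mul_pos (by positivity) (Real.sqrt_pos.2 (by linarith))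
  set c₂ : ℝ := min (A / (4 * R)) (1/2) with hc2
  have hc2pos : 0 < c₂ := lt_min (by positivity) (by norm_num)
  refine ⟨min c₁ c₂, lt_min hc1pos hc2pos, ?_⟩
  intro r hr
  have hr0 : (0:ℝ) < r := by linarith
  have hrm1 : (1:ℝ) ≤ r ^ (k+1) := one_le_pow₀ hr.le
  by_cases hcase : r < R
  · -- region 1 : 1 < r < R
    have hδ : schDelta (k+3) r
        = 2 * r ^ (k+2) * Real.sqrt ((r ^ (k+1) - 1) / r ^ (k+1)) := by
      rw [schDelta, if_pos (hRdef ▸ hcase), h1, h2]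
    have hδ0 : 0 ≤ schDelta (k+3) r := by rw [hδ]; positivity
    have hδle : schDelta (k+3) r ≤ 2 * R ^ (k+2) * (Real.sqrt K * Real.sqrt (r - 1)) := by
      rw [hδ]
      have hs1 : Real.sqrt ((r ^ (k+1) - 1) / r ^ (k+1)) ≤ Real.sqrt (K * (r - 1)) := by
        apply Real.sqrt_le_sqrt
        calc (r ^ (k+1) - 1) / r ^ (k+1) ≤ r ^ (k+1) - 1 :=
              div_le_self (by linarith) hrm1
          _ ≤ K * (r - 1) := hgeom r hr.le hcase.le
      rw [Real.sqrt_mul hK0.le] at hs1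
      have hrR : r ^ (k+2) ≤ R ^ (k+2) := pow_le_pow_left₀ hr0.le hcase.le _
      have := mul_le_mul hrR hs1 (Real.sqrt_nonneg _) (by positivity : (0:ℝ) ≤ R ^ (k+2))
      linarith
    have hkey : c₁ * (2 * R ^ (k+2) * (Real.sqrt K * Real.sqrt (r - 1)))
        = 2 / Real.sqrt K * Real.sqrt (r - 1) := by
      rw [hc1]
      exact sch_const_eq (by positivity) hsK0 hsK
    calc min c₁ c₂ * schDelta (k+3) r ≤ c₁ * schDelta (k+3) r :=
          mul_le_mul_of_nonneg_right (min_le_left _ _) hδ0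
      _ ≤ c₁ * (2 * R ^ (k+2) * (Real.sqrt K * Real.sqrt (r - 1))) :=
          mul_le_mul_of_nonneg_left hδle hc1pos.le
      _ = 2 / Real.sqrt K * Real.sqrt (r - 1) := hkey
      _ ≤ schDist (k+3) r := hlow r hr hcase.le
  · -- region 2 : R ≤ r
    have hRr : R ≤ r := not_lt.1 hcase
    set y : ℝ := (r ^ (k+1) - 1) / r ^ (k+1) with hy
    have hy0 : 0 ≤ y := by
      apply div_nonneg (by linarith) (by positivity)
    have hy1 : y ≤ 1 := by
      rw [hy, div_le_one (by positivity)]; linarith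
    have hsy1 : Real.sqrt y ≤ 1 := Real.sqrt_le_one.2 hy1
    have hδ : schDelta (k+3) r = 2 * r ^ (k+2) * (1 - Real.sqrt y) := by
      rw [schDelta, if_neg (by rw [← hRdef]; exact hcase), h1, h2]
    have hδ0 : 0 ≤ schDelta (k+3) r := by
      rw [hδ]
      have : 0 ≤ 1 - Real.sqrt y := by linarith
      positivity
    have hδle : schDelta (k+3) r ≤ 2 * r := by
      have hys : y ≤ Real.sqrt y := by
        nlinarith [Real.mul_self_sqrt hy0, Real.sqrt_nonneg y]
      have h1y : 1 - y = (r ^ (k+1))⁻¹ := by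
        rw [hy]; field_simp; ring
      have hstep : 1 - Real.sqrt y ≤ (r ^ (k+1))⁻¹ := by
        rw [← h1y]; linarith
      calc schDelta (k+3) r = 2 * r ^ (k+2) * (1 - Real.sqrt y) := hδ
        _ ≤ 2 * r ^ (k+2) * (r ^ (k+1))⁻¹ :=
            mul_le_mul_of_nonneg_left hstep (by positivity)
        _ = 2 * r := by
            rw [pow_succ']
            field_simp
    -- lower bound for the distance
    have hfRr : IntervalIntegrable f MeasureTheory.volume R r := by
      apply ContinuousOn.intervalIntegrable
      rw [Set.uIcc_of_le hRr]
      apply Real.continuous_sqrt.comp_continuousOn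
      apply ContinuousOn.div (continuous_pow (k+1)).continuousOn
        ((continuous_pow (k+1)).sub continuous_const).continuousOn
      intro x hx
      have hx1 : 1 < x := lt_of_lt_of_le hR1 hx.1
      have : (1:ℝ) < x ^ (k+1) := one_lt_pow₀ hx1 (by omega)
      intro hcon
      have hcon' : x ^ (k+1) - 1 = (0:ℝ) := hcon
      linarith
    have hsplit : schDist (k+3) r = (∫ ξ in (1:ℝ)..R, f ξ) + ∫ ξ in R..r, f ξ := by
      rw [hd]
      exact (intervalIntegral.integral_add_adjacent_intervals (hint R hR1.le) hfRr).symm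
    have htail : r - R ≤ ∫ ξ in R..r, f ξ := by
      have h1f : ∀ ξ ∈ Set.Icc R r, (1:ℝ) ≤ f ξ := by
        intro ξ hξ
        have hξ1 : 1 < ξ := lt_of_lt_of_le hR1 hξ.1
        have hxm : (1:ℝ) < ξ ^ (k+1) := one_lt_pow₀ hξ1 (by omega)
        have : (1:ℝ) ≤ ξ ^ (k+1) / (ξ ^ (k+1) - 1) :=
          (one_le_div (by linarith)).2 (by linarith)
        calc (1:ℝ) = Real.sqrt 1 := Real.sqrt_one.symm
          _ ≤ f ξ := Real.sqrt_le_sqrt this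
      have := intervalIntegral.integral_mono_on hRr
        (intervalIntegrable_const (c := (1:ℝ))) hfRr h1f
      simpa using this
    have hhead : A ≤ ∫ ξ in (1:ℝ)..R, f ξ := by
      have := hlow R hR1 le_rfl
      rwa [hd R] at this
    have hdistlow : A + (r - R) ≤ schDist (k+3) r := by
      rw [hsplit]; linarith
    have hc2A : c₂ * (4 * R) ≤ A := (le_div_iff₀ (by positivity)).1 (min_le_left _ _)
    have hc2half : c₂ ≤ 1/2 := min_le_right _ _
    calc min c₁ c₂ * schDelta (k+3) r ≤ c₂ * schDelta (k+3) r :=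
          mul_le_mul_of_nonneg_right (min_le_right _ _) hδ0
      _ ≤ c₂ * (2 * r) := mul_le_mul_of_nonneg_left hδle hc2pos.le
      _ ≤ A + (r - R) := by
          have e1 : c₂ * (2 * r) = (1/2) * (c₂ * (4 * R)) + 2 * (c₂ * (r - R)) := by ring
          have h1' : c₂ * (r - R) ≤ (1/2) * (r - R) :=
            mul_le_mul_of_nonneg_right hc2half (sub_nonneg.2 hRr)
          linarith [hc2A, h1', hApos, e1]
      _ ≤ schDist (k+3) r := hdistlow
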